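/- In the Heisenberg group G = ⟨a,b,c | bab⁻¹a⁻¹ = c, ac = ca, bc = cb⟩ with generating set S = {a,b,c}, and H the cyclic subgroup generated by c, the distance from the element a^k b^ℓ c^p to H in the word metric d_S equals |k| + |ℓ|. -/

import Mathlib

/-- The discrete Heisenberg group in normal-form coordinates: the element
`⟨k, l, p⟩` represents `a^k b^l c^p`.  (Equivalently, upper triangular `3×3`
integer matrices with `1`s on the diagonal.) -/
@[ext] structure Heis where
  k : ℤ
  l : ℤ
  p : ℤ

namespace Heis

instance : Mul Heis := ⟨fun x y => ⟨x.k + y.k, x.l + y.l, x.p + y.p + x.l * y.k⟩⟩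
instance : One Heis := ⟨⟨0, 0, 0⟩⟩
instance : Inv Heis := ⟨fun x => ⟨-x.k, -x.l, -x.p + x.l * x.k⟩⟩

lemma mul_def (x y : Heis) : x * y = ⟨x.k + y.k, x.l + y.l, x.p + y.p + x.l * y.k⟩ := rfl
lemma one_def : (1 : Heis) = ⟨0, 0, 0⟩ := rfl
lemma inv_def (x : Heis) : x⁻¹ = ⟨-x.k, -x.l, -x.p + x.l * x.k⟩ := rfl

instance : Group Heis where
  mul_assoc x y z := by ext <;> simp [mul_def] <;> ring
  one_mul x := by ext <;> simp [mul_def, one_def]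
  mul_one x := by ext <;> simp [mul_def, one_def]
  inv_mul_cancel x := by ext <;> simp [mul_def, inv_def, one_def]

/-- The generator `a`. -/
def a : Heis := ⟨1, 0, 0⟩
/-- The generator `b`. -/
def b : Heis := ⟨0, 1, 0⟩
/-- The generator `c`. -/
def c : Heis := ⟨0, 0, 1⟩

end Heis


open Heis

/-- The word length of `g` with respect to the (symmetrized) alphabet `S`. -/
noncomputable def wordLength {G : Type*} [Group G] (S : Set G) (g : G) : ℕ :=
  sInf {n | ∃ w : List G, (∀ x ∈ w, x ∈ S ∨ x⁻¹ ∈ S) ∧ w.prod = g ∧ w.length = n}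

/-- The word metric on `G` associated to the generating set `S`. -/
noncomputable def wordDist {G : Type*} [Group G] (S : Set G) (x y : G) : ℕ :=
  wordLength S (x⁻¹ * y)

/-- The generating set `S = {a,b,c}` of the Heisenberg group. -/
def heisGens : Set Heis := {a, b, c}

/-- The abelianized size `|k| + |l|`. -/
def fKL (x : Heis) : ℕ := x.k.natAbs + x.l.natAbs

lemma fKL_mul_le (x y : Heis) : fKL (x * y) ≤ fKL x + fKL y := by
  simp only [fKL, mul_def]
  have h1 := Int.natAbs_add_le x.k y.k
  have h2 := Int.natAbs_add_le x.l y.l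
  omega

lemma fKL_gen (x : Heis) (hx : x ∈ heisGens ∨ x⁻¹ ∈ heisGens) : fKL x ≤ 1 := by
  rcases hx with h | h <;>
    rcases h with h | h | h <;>
      simp_all [heisGens, fKL, a, b, c, inv_def] <;>
  · have hk : x.k = -(x⁻¹).k := by simp [inv_def]
    have hl : x.l = -(x⁻¹).l := by simp [inv_def]
    omega

lemma fKL_prod_le (w : List Heis) (hw : ∀ x ∈ w, x ∈ heisGens ∨ x⁻¹ ∈ heisGens) :
    fKL w.prod ≤ w.length := by
  induction w with
  | nil => simp [fKL, one_def]
  | cons x t ih =>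
    simp only [List.prod_cons, List.length_cons]
    calc fKL (x * t.prod) ≤ fKL x + fKL t.prod := fKL_mul_le _ _
      _ ≤ 1 + t.length := by
          have := fKL_gen x (hw x (by simp))
          have := ih (fun y hy => hw y (by simp [hy]))
          omega
      _ = t.length + 1 := by omega

lemma exists_word_zpow (x : Heis) (hx : x ∈ heisGens) (n : ℤ) :
    ∃ w : List Heis, (∀ y ∈ w, y ∈ heisGens ∨ y⁻¹ ∈ heisGens) ∧
      w.prod = x ^ n ∧ w.length = n.natAbs := by
  rcases le_or_gt 0 n with h | h
  · refine ⟨List.replicate n.toNat x, ?_, ?_, by simp; omega⟩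
    · intro y hy; rw [List.eq_of_mem_replicate hy]; exact Or.inl hx
    · rw [List.prod_replicate, ← zpow_natCast]; congr 1; omega
  · refine ⟨List.replicate (-n).toNat x⁻¹, ?_, ?_, by simp; omega⟩
    · intro y hy; rw [List.eq_of_mem_replicate hy]; right; simpa using hx
    · rw [List.prod_replicate, ← zpow_natCast, inv_zpow']; congr 1; omega

lemma wordLength_le (x : Heis) (n : ℕ)
    (h : ∃ w : List Heis, (∀ y ∈ w, y ∈ heisGens ∨ y⁻¹ ∈ heisGens) ∧
      w.prod = x ∧ w.length = n) : wordLength heisGens x ≤ n :=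
  Nat.sInf_le h

lemma le_wordLength (x : Heis) : fKL x ≤ wordLength heisGens x := by
  have hne : {n | ∃ w : List Heis, (∀ y ∈ w, y ∈ heisGens ∨ y⁻¹ ∈ heisGens) ∧
      w.prod = x ∧ w.length = n}.Nonempty := by
    obtain ⟨wa, ha1, ha2, ha3⟩ := exists_word_zpow a (by simp [heisGens]) x.k
    obtain ⟨wb, hb1, hb2, hb3⟩ := exists_word_zpow b (by simp [heisGens]) x.l
    obtain ⟨wc, hc1, hc2, hc3⟩ := exists_word_zpow c (by simp [heisGens]) x.p
    refine ⟨_, wa ++ wb ++ wc, ?_, ?_, rfl⟩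
    · intro y hy
      simp only [List.mem_append] at hy
      rcases hy with (hy | hy) | hy
      exacts [ha1 y hy, hb1 y hy, hc1 y hy]
    · simp only [List.prod_append, ha2, hb2, hc2]
      have hak : a ^ x.k = ⟨x.k, 0, 0⟩ := by
        induction x.k using Int.induction_on with
        | zero => rfl
        | succ n ih => rw [zpow_add, ih]; ext <;> simp [mul_def, a]
        | pred n ih => rw [sub_eq_add_neg, zpow_add, ih]; ext <;> simp [mul_def, a, inv_def]
      have hbl : b ^ x.l = ⟨0, x.l, 0⟩ := by
        induction x.l using Int.induction_on with
        | zero => rfl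
        | succ n ih => rw [zpow_add, ih]; ext <;> simp [mul_def, b]
        | pred n ih => rw [sub_eq_add_neg, zpow_add, ih]; ext <;> simp [mul_def, b, inv_def]
      have hcp : c ^ x.p = ⟨0, 0, x.p⟩ := by
        induction x.p using Int.induction_on with
        | zero => rfl
        | succ n ih => rw [zpow_add, ih]; ext <;> simp [mul_def, c]
        | pred n ih => rw [sub_eq_add_neg, zpow_add, ih]; ext <;> simp [mul_def, c, inv_def]
      rw [hak, hbl, hcp]; ext <;> simp [mul_def]
  obtain ⟨w, hw1, hw2, hw3⟩ := Nat.sInf_mem hne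
  rw [wordLength, ← hw3, ← hw2] at *
  exact le_of_le_of_eq (fKL_prod_le w hw1) hw3.symm

lemma a_zpow (n : ℤ) : a ^ n = ⟨n, 0, 0⟩ := by
  induction n using Int.induction_on with
  | zero => rfl
  | succ n ih => rw [zpow_add, ih]; ext <;> simp [mul_def, a]
  | pred n ih => rw [sub_eq_add_neg, zpow_add, ih]; ext <;> simp [mul_def, a, inv_def]

lemma b_zpow (n : ℤ) : b ^ n = ⟨0, n, 0⟩ := by
  induction n using Int.induction_on with
  | zero => rfl
  | succ n ih => rw [zpow_add, ih]; ext <;> simp [mul_def, b]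
  | pred n ih => rw [sub_eq_add_neg, zpow_add, ih]; ext <;> simp [mul_def, b, inv_def]

lemma c_zpow (n : ℤ) : c ^ n = ⟨0, 0, n⟩ := by
  induction n using Int.induction_on with
  | zero => rfl
  | succ n ih => rw [zpow_add, ih]; ext <;> simp [mul_def, c]
  | pred n ih => rw [sub_eq_add_neg, zpow_add, ih]; ext <;> simp [mul_def, c, inv_def]

/-- In the Heisenberg group with `S = {a,b,c}` and `H = ⟨c⟩`, the distance from
`a^k b^ℓ c^p` to `H` in the word metric equals `|k| + |ℓ|`. -/
theorem heisenberg_dist_to_center (k l p : ℤ) :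
    sInf {n : ℕ | ∃ m : ℤ, n = wordDist heisGens (a ^ k * b ^ l * c ^ p) (c ^ m)} =
      k.natAbs + l.natAbs := by
  have hg : a ^ k * b ^ l * c ^ p = (⟨k, l, p⟩ : Heis) := by
    rw [a_zpow, b_zpow, c_zpow]; ext <;> simp [mul_def]
  apply le_antisymm
  · -- upper bound: take m = p
    apply Nat.sInf_le
    refine ⟨p, le_antisymm ?_ ?_⟩
    · -- fKL ≤ wordDist
      have := le_wordLength ((a ^ k * b ^ l * c ^ p)⁻¹ * c ^ p)
      rw [wordDist]
      refine le_trans (le_of_eq ?_) this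
      rw [hg, c_zpow]
      simp [fKL, inv_def, mul_def]
    · -- wordDist ≤ |k| + |l|
      rw [wordDist]
      have key : (a ^ k * b ^ l * c ^ p)⁻¹ * c ^ p = b ^ (-l) * a ^ (-k) := by
        rw [hg, c_zpow, a_zpow, b_zpow]
        ext <;> simp [inv_def, mul_def]
      rw [key]
      obtain ⟨wb, hb1, hb2, hb3⟩ := exists_word_zpow b (by simp [heisGens]) (-l)
      obtain ⟨wa, ha1, ha2, ha3⟩ := exists_word_zpow a (by simp [heisGens]) (-k)
      apply wordLength_le
      refine ⟨wb ++ wa, ?_, ?_, ?_⟩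
      · intro y hy
        rcases List.mem_append.1 hy with hy | hy
        exacts [hb1 y hy, ha1 y hy]
      · simp [List.prod_append, hb2, ha2]
      · simp [hb3, ha3]; omega
  · -- lower bound
    apply le_csInf
    · exact ⟨_, p, rfl⟩
    · rintro n ⟨m, rfl⟩
      have := le_wordLength ((a ^ k * b ^ l * c ^ p)⁻¹ * c ^ m)
      rw [wordDist]
      refine le_trans (le_of_eq ?_) this
      rw [hg, c_zpow]
      simp [fKL, inv_def, mul_def]
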